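/- arXiv:2605.15750 — 10 statements merged into one kernel-verified Lean document; each statement's English description precedes it below -/
import Mathlib

section
/- Let E be a nonempty finite set of EVs, let p_port > 0 be the port rating, p_CS > 0 the station power cap, and for each i in E let the request r_i be a real number with 0 < r_i ≤ p_port, each EV i having utility u_i(x) = min(x / r_i, 1). Suppose ω ≥ 0 is a real number and define the water-filling allocation p_i = min(ω, r_i) for each i in E, and suppose that ∑_{i∈E} p_i = min(p_CS, ∑_{i∈E} r_i). Then p is a feasible allocation (0 ≤ p_i ≤ p_port for all i and ∑_{i∈E} p_i ≤ p_CS) and p is a fair allocation, i.e. it is simultaneously: (1) envy-free: u_i(p_i) ≥ u_i(p_j) for all i, j ∈ E; (2) Pareto efficient: for every feasible allocation p', if u_i(p'_i) > u_i(p_i) for some i ∈ E then u_k(p'_k) < u_k(p_k) for some k ∈ E; and (3) proportional: u_i(p_i) ≥ u_i(p_CS) / |E| for all i ∈ E. -/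
/-- The water-filling allocation `p i = min ω (r i)` that exactly exhausts
`min p_CS (∑ r i)` is feasible and fair (envy-free, Pareto efficient, proportional)
for a conventional FCS. -/
theorem waterfilling_fair_conventional {ι : Type*} (E : Finset ι) (hE : E.Nonempty)
    (pport pCS : ℝ) (hpport : 0 < pport) (hpCS : 0 < pCS)
    (r : ι → ℝ) (hr : ∀ i ∈ E, 0 < r i ∧ r i ≤ pport)
    (u : ι → ℝ → ℝ) (hu : ∀ i, ∀ x : ℝ, u i x = min (x / r i) 1)
    (ω : ℝ) (hω : 0 ≤ ω)
    (p : ι → ℝ) (hp : ∀ i ∈ E, p i = min ω (r i))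
    (hsum : ∑ i ∈ E, p i = min pCS (∑ i ∈ E, r i)) :
    -- feasibility
    ((∀ i ∈ E, 0 ≤ p i ∧ p i ≤ pport) ∧ ∑ i ∈ E, p i ≤ pCS) ∧
    -- (1) envy-freeness
    (∀ i ∈ E, ∀ j ∈ E, u i (p i) ≥ u i (p j)) ∧
    -- (2) Pareto efficiency
    (∀ p' : ι → ℝ, (∀ i ∈ E, 0 ≤ p' i ∧ p' i ≤ pport) → (∑ i ∈ E, p' i ≤ pCS) →
      (∃ i ∈ E, u i (p' i) > u i (p i)) → ∃ k ∈ E, u k (p' k) < u k (p k)) ∧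
    -- (3) proportionality
    (∀ i ∈ E, u i (p i) ≥ u i pCS / (E.card : ℝ)) := by
  -- basic facts
  have hple : ∀ i ∈ E, p i ≤ r i := fun i hi => (hp i hi) ▸ min_le_right _ _
  have hminrw : ∀ i ∈ E, ∀ x : ℝ, min (x / r i) 1 = min x (r i) / r i := by
    intro i hi x
    have hri := (hr i hi).1
    have h1 : x / r i ⊓ 1 = x / r i ⊓ (r i / r i) := by rw [div_self hri.ne']
    rw [h1, min_div_div_right hri.le]
  have hupi : ∀ i ∈ E, u i (p i) = p i / r i := by
    intro i hi
    have hri := (hr i hi).1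
    rw [hu, min_eq_left ((div_le_one hri).2 (hple i hi))]
  refine ⟨⟨?_, ?_⟩, ?_, ?_, ?_⟩
  · intro i hi
    obtain ⟨hr0, hr1⟩ := hr i hi
    rw [hp i hi]
    exact ⟨le_min hω hr0.le, (min_le_right _ _).trans hr1⟩
  · rw [hsum]; exact min_le_left _ _
  · -- envy-freeness
    intro i hi j hj
    have hri := (hr i hi).1
    rw [hupi i hi, hu, hp i hi, hp j hj, hminrw i hi]
    exact (div_le_div_iff_of_pos_right hri).2 (min_le_min (min_le_left _ _) le_rfl)
  · -- Pareto efficiency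
    intro p' hfeas' hsum' ⟨i, hi, hgt⟩
    by_contra hcon
    push_neg at hcon
    have hge : ∀ k ∈ E, p k ≤ p' k := by
      intro k hk
      have hrk := (hr k hk).1
      have h1 := hcon k hk
      rw [hupi k hk, hu, hminrw k hk] at h1
      have h2 : p k ≤ min (p' k) (r k) := (div_le_div_iff_of_pos_right hrk).1 h1
      exact h2.trans (min_le_left _ _)
    have hgt' : p i < p' i := by
      have hri := (hr i hi).1
      rw [hupi i hi, hu, hminrw i hi] at hgt
      have h2 : p i < min (p' i) (r i) := (div_lt_div_iff_of_pos_right hri).1 hgt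
      exact h2.trans_le (min_le_left _ _)
    have hlt : ∑ k ∈ E, p k < ∑ k ∈ E, p' k :=
      Finset.sum_lt_sum hge ⟨i, hi, hgt'⟩
    rcases le_total pCS (∑ k ∈ E, r k) with hc | hc
    · rw [hsum, min_eq_left hc] at hlt
      exact absurd hsum' (not_le.2 hlt)
    · -- ∑ p = ∑ r, but p i < r i
      have hpir : p i < r i := by
        have hri := (hr i hi).1
        rw [hupi i hi, hu] at hgt
        have : p i / r i < 1 := lt_of_lt_of_le hgt (min_le_right _ _)
        exact (div_lt_one hri).1 this
      have : ∑ k ∈ E, p k < ∑ k ∈ E, r k :=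
        Finset.sum_lt_sum hple ⟨i, hi, hpir⟩
      rw [hsum, min_eq_right hc] at this
      exact lt_irrefl _ this
  · -- proportionality
    intro i hi
    have hri := (hr i hi).1
    have hn : (1:ℝ) ≤ (E.card : ℝ) := by
      exact_mod_cast Nat.one_le_iff_ne_zero.2 (Finset.card_ne_zero_of_mem hi)
    have hnpos : (0:ℝ) < (E.card : ℝ) := lt_of_lt_of_le one_pos hn
    rw [hupi i hi, hu, hminrw i hi, ge_iff_le]
    rcases le_or_gt (r i) ω with hcase | hcase
    · have hpi : p i = r i := by rw [hp i hi, min_eq_right hcase]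
      rw [hpi, div_self hri.ne']
      have h1 : min pCS (r i) / r i ≤ 1 := (div_le_one hri).2 (min_le_right _ _)
      exact (div_le_one hnpos).2 (h1.trans hn)
    · have hpi : p i = ω := by rw [hp i hi, min_eq_left hcase.le]
      have hkey : min pCS (r i) ≤ (E.card : ℝ) * ω := by
        calc min pCS (r i)
            ≤ min pCS (∑ j ∈ E, r j) :=
              min_le_min le_rfl (Finset.single_le_sum (fun j hj => (hr j hj).1.le) hi)
          _ = ∑ j ∈ E, p j := hsum.symm
          _ ≤ (E.card : ℝ) * ω := by
              have := Finset.sum_le_card_nsmul E p ω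
                (fun j hj => (hp j hj) ▸ min_le_left _ _)
              simpa [nsmul_eq_mul] using this
      rw [div_div, div_le_div_iff₀ (mul_pos hri hnpos) hri, hpi]
      nlinarith [mul_le_mul_of_nonneg_right hkey hri.le]
end

section
/- Let E be a nonempty finite set of EVs, p_port > 0 the port rating, p_CS > 0 the station power cap, and for each i ∈ E let r_i be a real request with 0 < r_i ≤ p_port, each EV i having utility u_i(x) = min(x / r_i, 1). Then there exists a feasible allocation p : E → ℝ (i.e. 0 ≤ p_i ≤ p_port for all i and ∑_{i∈E} p_i ≤ p_CS) that is envy-free, Pareto efficient, and proportional. -/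
/-- For a conventional FCS there always exists a feasible allocation
that is envy-free, Pareto efficient, and proportional. -/
theorem exists_fair_allocation_conventional {ι : Type*} (E : Finset ι) (hE : E.Nonempty)
    (pport pCS : ℝ) (hpport : 0 < pport) (hpCS : 0 < pCS)
    (r : ι → ℝ) (hr : ∀ i ∈ E, 0 < r i ∧ r i ≤ pport)
    (u : ι → ℝ → ℝ) (hu : ∀ i, ∀ x : ℝ, u i x = min (x / r i) 1) :
    ∃ p : ι → ℝ,
      -- feasibility
      ((∀ i ∈ E, 0 ≤ p i ∧ p i ≤ pport) ∧ ∑ i ∈ E, p i ≤ pCS) ∧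
      -- envy-freeness
      (∀ i ∈ E, ∀ j ∈ E, u i (p i) ≥ u i (p j)) ∧
      -- Pareto efficiency
      (∀ p' : ι → ℝ, (∀ i ∈ E, 0 ≤ p' i ∧ p' i ≤ pport) → (∑ i ∈ E, p' i ≤ pCS) →
        (∃ i ∈ E, u i (p' i) > u i (p i)) → ∃ k ∈ E, u k (p' k) < u k (p k)) ∧
      -- proportionality
      (∀ i ∈ E, u i (p i) ≥ u i pCS / (E.card : ℝ)) := by
  classical
  set S := ∑ i ∈ E, r i with hSdef
  have hSpos : 0 < S := Finset.sum_pos (fun i hi => (hr i hi).1) hE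
  have hcardpos : (0:ℝ) < (E.card : ℝ) := by
    exact_mod_cast Finset.card_pos.mpr hE
  have hcard1 : (1:ℝ) ≤ (E.card : ℝ) := by
    exact_mod_cast Finset.card_pos.mpr hE
  -- find θ by IVT
  have hcont : Continuous (fun θ : ℝ => ∑ i ∈ E, min (r i) θ) :=
    continuous_finset_sum _ (fun i _ => continuous_const.min continuous_id)
  have hf0 : (∑ i ∈ E, min (r i) (0:ℝ)) = 0 :=
    Finset.sum_eq_zero (fun i hi => min_eq_right (hr i hi).1.le)
  have hfp : (∑ i ∈ E, min (r i) pport) = S :=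
    Finset.sum_congr rfl (fun i hi => min_eq_left (hr i hi).2)
  have hmem : min pCS S ∈ Set.Icc ((∑ i ∈ E, min (r i) (0:ℝ))) (∑ i ∈ E, min (r i) pport) := by
    rw [hf0, hfp]
    exact ⟨le_min hpCS.le hSpos.le, min_le_right _ _⟩
  obtain ⟨θ, hθmem, hθeq⟩ := intermediate_value_Icc hpport.le hcont.continuousOn hmem
  obtain ⟨hθ0, hθp⟩ := hθmem
  simp only at hθeq
  -- the allocation
  set p : ι → ℝ := fun i => min (r i) θ with hpdef
  have hple : ∀ i ∈ E, p i ≤ r i := fun i _ => min_le_left _ _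
  have hp0 : ∀ i ∈ E, 0 ≤ p i := fun i hi => le_min (hr i hi).1.le hθ0
  have hupi : ∀ i ∈ E, u i (p i) = p i / r i := by
    intro i hi
    rw [hu]
    exact min_eq_left ((div_le_one (hr i hi).1).mpr (hple i hi))
  -- if total requests fit, everyone gets their request
  have hfull : S ≤ pCS → ∀ i ∈ E, p i = r i := by
    intro hS
    have : ∑ i ∈ E, p i = ∑ i ∈ E, r i := by
      rw [hθeq, min_eq_right hS, hSdef]
    intro i hi
    exact (Finset.sum_eq_sum_iff_of_le (fun j hj => hple j hj)).mp this i hi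
  -- u is always at most 1
  have hu1 : ∀ i, ∀ x : ℝ, u i x ≤ 1 := by
    intro i x; rw [hu]; exact min_le_right _ _
  -- sum of p is at most card * θ
  have hsumθ : ∑ i ∈ E, p i ≤ (E.card : ℝ) * θ := by
    calc ∑ i ∈ E, p i ≤ ∑ _i ∈ E, θ := Finset.sum_le_sum (fun i _ => min_le_right _ _)
    _ = (E.card : ℝ) * θ := by rw [Finset.sum_const, nsmul_eq_mul]
  refine ⟨p, ⟨fun i hi => ⟨hp0 i hi, le_trans (hple i hi) (hr i hi).2⟩, ?_⟩, ?_, ?_, ?_⟩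
  · rw [hθeq]; exact min_le_left _ _
  · -- envy-freeness
    intro i hi j hj
    have hri := (hr i hi).1
    rw [hu, hu]
    have hui : min (p i / r i) 1 = min (θ / r i) 1 := by
      rcases min_cases (r i) θ with ⟨h1, h2⟩ | ⟨h1, h2⟩
      · rw [hpdef]; simp only [h1, div_self hri.ne', min_self]
        symm
        exact min_eq_right ((le_div_iff₀ hri).mpr (by linarith))
      · rw [hpdef]; simp only [h1]
    rw [hui]
    exact min_le_min ((div_le_div_iff_of_pos_right hri).mpr (min_le_right _ _)) le_rfl
  · -- Pareto efficiency
    intro p' hp' hsum' ⟨i, hi, himp⟩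
    by_contra hc
    push_neg at hc
    by_cases hS : S ≤ pCS
    · -- everyone already has utility 1
      have h1 : u i (p i) = 1 := by
        rw [hupi i hi, hfull hS i hi, div_self (hr i hi).1.ne']
      linarith [hu1 i (p' i), h1, himp]
    · -- the cap binds: ∑ p = pCS
      have hcap : ∑ k ∈ E, p k = pCS := by rw [hθeq]; exact min_eq_left (le_of_not_ge hS)
      -- each k gets at least as much power
      have hge : ∀ k ∈ E, p k ≤ p' k := by
        intro k hk
        have h1 := hc k hk
        have hrk := (hr k hk).1
        rw [hu k (p' k), hupi k hk] at h1
        have h2 : p k / r k ≤ p' k / r k :=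
          le_trans h1 (min_le_left _ _)
        exact (div_le_div_iff_of_pos_right hrk).mp h2
      have hgt : p i < p' i := by
        have hri := (hr i hi).1
        rw [hu i (p' i), hupi i hi] at himp
        have h2 : p i / r i < p' i / r i :=
          lt_of_lt_of_le himp (min_le_left _ _)
        exact (div_lt_div_iff_of_pos_right hri).mp h2
      have : ∑ k ∈ E, p k < ∑ k ∈ E, p' k :=
        Finset.sum_lt_sum hge ⟨i, hi, hgt⟩
      linarith [hcap ▸ this]
  · -- proportionality
    intro i hi
    have hri := (hr i hi).1
    rw [hupi i hi, hu]
    by_cases hS : S ≤ pCS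
    · rw [hfull hS i hi, div_self hri.ne', ge_iff_le, div_le_iff₀ hcardpos]
      nlinarith [min_le_right (pCS / r i) (1:ℝ), hcard1]
    · have hcap : ∑ k ∈ E, p k = pCS := by rw [hθeq]; exact min_eq_left (le_of_not_ge hS)
      rcases le_or_gt (r i) θ with hcase | hcase
      · -- p i = r i, utility 1
        have hpi : p i = r i := min_eq_left hcase
        rw [hpi, div_self hri.ne', ge_iff_le, div_le_iff₀ hcardpos]
        nlinarith [min_le_right (pCS / r i) (1:ℝ), hcard1]
      · -- p i = θ and card * θ ≥ pCS
        have hpi : p i = θ := min_eq_right hcase.le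
        have hθcap : pCS ≤ (E.card : ℝ) * θ := hcap ▸ hsumθ
        have h2 : pCS / r i ≤ ((E.card : ℝ) * θ) / r i :=
          (div_le_div_iff_of_pos_right hri).mpr hθcap
        rw [hpi, ge_iff_le, div_le_iff₀ hcardpos]
        calc min (pCS / r i) 1 ≤ pCS / r i := min_le_left _ _
        _ ≤ ((E.card : ℝ) * θ) / r i := h2
        _ = θ / r i * (E.card : ℝ) := by ring
end

section
/- Let E be a nonempty finite set, p_port > 0, p_CS > 0, and let r_i ∈ (0, p_port] be real requests for i ∈ E, with utilities u_i(x) = min(x / r_i, 1). Let p : E → ℝ be an allocation satisfying 0 ≤ p_i ≤ r_i for all i ∈ E and ∑_{i∈E} p_i = min(p_CS, ∑_{i∈E} r_i). Then p is Pareto efficient: for every allocation p' : E → ℝ with 0 ≤ p'_i ≤ p_port for all i and ∑_{i∈E} p'_i ≤ p_CS, if u_i(p'_i) > u_i(p_i) for some i ∈ E, then u_k(p'_k) < u_k(p_k) for some k ∈ E. -/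
/-- Any allocation with `0 ≤ p i ≤ r i` that exactly exhausts
`min p_CS (∑ r i)` is Pareto efficient among feasible allocations. -/
theorem pareto_efficient_conventional {ι : Type*} (E : Finset ι) (hE : E.Nonempty)
    (pport pCS : ℝ) (hpport : 0 < pport) (hpCS : 0 < pCS)
    (r : ι → ℝ) (hr : ∀ i ∈ E, 0 < r i ∧ r i ≤ pport)
    (u : ι → ℝ → ℝ) (hu : ∀ i, ∀ x : ℝ, u i x = min (x / r i) 1)
    (p : ι → ℝ) (hp : ∀ i ∈ E, 0 ≤ p i ∧ p i ≤ r i)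
    (hsum : ∑ i ∈ E, p i = min pCS (∑ i ∈ E, r i)) :
    ∀ p' : ι → ℝ, (∀ i ∈ E, 0 ≤ p' i ∧ p' i ≤ pport) → (∑ i ∈ E, p' i ≤ pCS) →
      (∃ i ∈ E, u i (p' i) > u i (p i)) → ∃ k ∈ E, u k (p' k) < u k (p k) := by
  intro p' hp' hsum' ⟨i, hiE, hi⟩
  by_contra h
  push_neg at h
  -- u k (p k) = p k / r k since p k ≤ r k
  have hupk : ∀ k ∈ E, u k (p k) = p k / r k := by
    intro k hk
    rw [hu]
    exact min_eq_left ((div_le_one (hr k hk).1).mpr (hp k hk).2)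
  -- p k ≤ p' k for all k
  have hle : ∀ k ∈ E, p k ≤ p' k := by
    intro k hk
    have h1 := h k hk
    rw [hupk k hk, hu] at h1
    rcases le_or_gt (p' k / r k) 1 with hc | hc
    · rw [min_eq_left hc] at h1
      exact (div_le_div_iff_of_pos_right (hr k hk).1).mp h1
    · have : r k < p' k := (one_lt_div (hr k hk).1).mp hc
      linarith [(hp k hk).2]
  -- strict at i
  have hlt : p i < p' i := by
    rw [hupk i hiE, hu] at hi
    have h2 : p i / r i < p' i / r i := lt_of_lt_of_le hi (min_le_left _ _)
    exact (div_lt_div_iff_of_pos_right (hr i hiE).1).mp h2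
  have hsumlt : ∑ k ∈ E, p k < ∑ k ∈ E, p' k :=
    Finset.sum_lt_sum hle ⟨i, hiE, hlt⟩
  rw [hsum] at hsumlt
  have hminS : min pCS (∑ k ∈ E, r k) = ∑ k ∈ E, r k := by
    rcases min_cases pCS (∑ k ∈ E, r k) with ⟨he, _⟩ | ⟨he, _⟩
    · linarith
    · exact he
  -- then p k = r k for all k
  have hpk : ∀ k ∈ E, p k = r k := by
    have hsum2 : ∑ k ∈ E, p k = ∑ k ∈ E, r k := by rw [hsum, hminS]
    intro k hk
    by_contra hne
    have : ∑ k ∈ E, p k < ∑ k ∈ E, r k :=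
      Finset.sum_lt_sum (fun j hj => (hp j hj).2)
        ⟨k, hk, lt_of_le_of_ne (hp k hk).2 hne⟩
    linarith
  have : u i (p i) = 1 := by
    rw [hupk i hiE, hpk i hiE, div_self (ne_of_gt (hr i hiE).1)]
  rw [this, hu] at hi
  exact absurd hi (not_lt.mpr (min_le_right _ _))
end

section
/- Let E be a nonempty finite set, p_CS > 0, and let r_i > 0 be real requests for i ∈ E, with utilities u_i(x) = min(x / r_i, 1). Let ω ≥ 0 and define p_i = min(ω, r_i) for each i ∈ E, and suppose ∑_{i∈E} p_i = min(p_CS, ∑_{i∈E} r_i). Then the allocation p is proportional: for every i ∈ E, u_i(p_i) ≥ u_i(p_CS) / |E|. -/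
/-- The water-filling allocation exactly exhausting `min p_CS (∑ r i)`
is proportional. -/
theorem waterfilling_proportional {ι : Type*} (E : Finset ι) (hE : E.Nonempty)
    (pCS : ℝ) (hpCS : 0 < pCS)
    (r : ι → ℝ) (hr : ∀ i ∈ E, 0 < r i)
    (u : ι → ℝ → ℝ) (hu : ∀ i, ∀ x : ℝ, u i x = min (x / r i) 1)
    (ω : ℝ) (hω : 0 ≤ ω)
    (p : ι → ℝ) (hp : ∀ i ∈ E, p i = min ω (r i))
    (hsum : ∑ i ∈ E, p i = min pCS (∑ i ∈ E, r i)) :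
    ∀ i ∈ E, u i (p i) ≥ u i pCS / (E.card : ℝ) := by
  intro i hi
  have hnn : 1 ≤ E.card := Finset.card_pos.mpr hE
  have hn : (1:ℝ) ≤ (E.card : ℝ) := by exact_mod_cast hnn
  have hn0 : (0:ℝ) < (E.card : ℝ) := by linarith
  have hri := hr i hi
  rw [hu, hu, hp i hi]
  rcases le_or_gt (r i) ω with h | h
  · rw [min_eq_right h, div_self hri.ne', min_self]
    have h1 : min (pCS / r i) 1 ≤ 1 := min_le_right _ _
    rw [ge_iff_le, div_le_one hn0]
    linarith
  · rw [min_eq_left h.le]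
    have hlt : ω / r i < 1 := (div_lt_one hri).mpr h
    rw [min_eq_left hlt.le, ge_iff_le, div_le_iff₀ hn0]
    -- n * ω ≥ ∑ min(ω, r_j) = min pCS (∑ r) ≥ min pCS (r i)
    have hsum2 : ∑ j ∈ E, p j ≤ (E.card : ℝ) * ω := by
      calc ∑ j ∈ E, p j ≤ ∑ _j ∈ E, ω := by
            apply Finset.sum_le_sum
            intro j hj
            rw [hp j hj]; exact min_le_left _ _
        _ = (E.card : ℝ) * ω := by rw [Finset.sum_const, nsmul_eq_mul]
    have hri_sum : r i ≤ ∑ j ∈ E, r j :=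
      Finset.single_le_sum (fun j hj => (hr j hj).le) hi
    have hmin : min pCS (r i) ≤ (E.card : ℝ) * ω := by
      calc min pCS (r i) ≤ min pCS (∑ j ∈ E, r j) := min_le_min le_rfl hri_sum
        _ = ∑ j ∈ E, p j := hsum.symm
        _ ≤ (E.card : ℝ) * ω := hsum2
    have key : min pCS (r i) / r i = min (pCS / r i) 1 := by
      rw [← min_div_div_right hri.le, div_self hri.ne']
    rw [← key]
    calc min pCS (r i) / r i ≤ ((E.card : ℝ) * ω) / r i := by gcongr
      _ = ω / r i * (E.card : ℝ) := by ring
end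

section
/- Let n ≥ 1 be a natural number, let C and r_1, …, r_n be real numbers, and for each k ∈ {1, …, n} define ω_k = (C − ∑_{i=1}^{k−1} r_i) / (n − k + 1). Fix t ∈ {1, …, n} and suppose that r_k ≤ ω_k for every k ∈ {1, …, t−1}. Then the sequence of water levels is nondecreasing up to index t: ω_1 ≤ ω_2 ≤ ⋯ ≤ ω_t. In particular, ω_t ≥ ω_1 = C / n, and ω_t ≥ r_k for every k ∈ {1, …, t−1}. -/
/-- Monotonicity of the water levels in the progressive-filling analysis.
With `ω k = (C − ∑_{i=1}^{k−1} r i) / (n − k + 1)`, if each EV `k < t` was fulfilled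
(`r k ≤ ω k`), then `ω` is nondecreasing on `{1, …, t}`; in particular
`ω 1 = C / n`, `ω t ≥ C / n`, and `ω t ≥ r k` for every `k < t`. -/
theorem water_level_monotone (n : ℕ) (hn : 1 ≤ n) (C : ℝ) (r : ℕ → ℝ)
    (ω : ℕ → ℝ)
    (hω : ∀ k, ω k = (C - ∑ i ∈ Finset.Ico 1 k, r i) / ((n : ℝ) - (k : ℝ) + 1))
    (t : ℕ) (ht1 : 1 ≤ t) (htn : t ≤ n)
    (hfulfilled : ∀ k, 1 ≤ k → k < t → r k ≤ ω k) :
    (∀ k l, 1 ≤ k → k ≤ l → l ≤ t → ω k ≤ ω l) ∧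
    ω 1 = C / (n : ℝ) ∧
    ω t ≥ C / (n : ℝ) ∧
    (∀ k, 1 ≤ k → k < t → ω t ≥ r k) := by
  have hstep : ∀ k, 1 ≤ k → k < t → ω k ≤ ω (k + 1) := by
    intro k hk1 hkt
    have hkn : k + 1 ≤ n := le_trans hkt htn
    have ha : (1 : ℝ) ≤ (n : ℝ) - (k : ℝ) := by
      have : ((k : ℝ) + 1) ≤ (n : ℝ) := by exact_mod_cast hkn
      linarith
    have hsum : ∑ i ∈ Finset.Ico 1 (k + 1), r i
        = (∑ i ∈ Finset.Ico 1 k, r i) + r k := by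
      rw [Finset.sum_Ico_succ_top hk1]
    have hr := hfulfilled k hk1 hkt
    rw [hω k] at hr
    rw [hω k, hω (k + 1), hsum]
    push_cast
    set S := ∑ i ∈ Finset.Ico 1 k, r i with hS
    rw [div_le_div_iff₀ (by linarith) (by linarith)]
    have hr' : r k * ((n : ℝ) - k + 1) ≤ C - S := by
      rw [le_div_iff₀ (by linarith)] at hr
      linarith
    nlinarith
  have hmono : ∀ k l, 1 ≤ k → k ≤ l → l ≤ t → ω k ≤ ω l := by
    intro k l hk1 hkl hlt
    induction l with
    | zero => omega
    | succ m ih =>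
      rcases Nat.eq_or_lt_of_le hkl with h | h
      · rw [h]
      · have hm : k ≤ m := by omega
        have h1m : 1 ≤ m := le_trans hk1 hm
        have hmt : m < t := by omega
        exact le_trans (ih hm (by omega)) (hstep m h1m hmt)
  have hω1 : ω 1 = C / (n : ℝ) := by
    rw [hω 1]
    simp
  refine ⟨hmono, hω1, ?_, ?_⟩
  · rw [ge_iff_le, ← hω1]; exact hmono 1 t le_rfl ht1 le_rfl
  · intro k hk1 hkt
    exact le_trans (hfulfilled k hk1 hkt) (hmono k t hk1 (le_of_lt hkt) le_rfl)
end

section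
/- Let n_port ≥ 1 and m_port ≥ 1 be natural numbers, let m_CS be a natural number satisfying the minimum station capacity condition m_CS ≥ m_port + (n_port − 1), let E be a nonempty finite set of EVs with |E| ≤ n_port, and let r_i be real module requests with 0 < r_i ≤ m_port for each i ∈ E, each EV i having utility u_i(x) = min(x / r_i, 1) for x ≥ 0 and u_i(x) = 0 for x < 0. Then there exists an integer allocation m : E → ℕ with m_i ≤ m_port for all i and ∑_{i∈E} m_i ≤ m_CS, which is simultaneously: (1) envy-free up to one module (EF1): u_i(m_i) ≥ u_i(m_j − 1) for all i, j ∈ E; (2) Pareto efficient among feasible integer allocations: for every m' : E → ℕ with m'_i ≤ m_port for all i and ∑_{i∈E} m'_i ≤ m_CS, if u_i(m'_i) > u_i(m_i) for some i then u_k(m'_k) < u_k(m_k) for some k; and (3) proportional: u_i(m_i) ≥ u_i(m_CS) / |E| for all i ∈ E. -/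
private lemma fca_mono {r x y : ℝ} (hr : 0 < r) (h : x ≤ y) :
    (if 0 ≤ x then min (x / r) 1 else 0) ≤ (if 0 ≤ y then min (y / r) 1 else 0) := by
  by_cases hx : 0 ≤ x
  · have hy : 0 ≤ y := hx.trans h
    simp only [if_pos hx, if_pos hy]
    exact min_le_min (by gcongr) le_rfl
  · simp only [if_neg hx]
    by_cases hy : 0 ≤ y
    · simp only [if_pos hy]
      exact le_min (div_nonneg hy hr.le) zero_le_one
    · simp [if_neg hy]

private lemma fca_le_one {r x : ℝ} :
    (if 0 ≤ x then min (x / r) 1 else 0) ≤ 1 := by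
  split_ifs
  · exact min_le_right _ _
  · exact zero_le_one

private lemma fca_full {r x : ℝ} (hr : 0 < r) (h : r ≤ x) :
    (if 0 ≤ x then min (x / r) 1 else 0) = 1 := by
  rw [if_pos (hr.le.trans h), min_eq_right ((one_le_div hr).mpr h)]

private lemma fca_lin {r x : ℝ} (hr : 0 < r) (hx : 0 ≤ x) (h : x ≤ r) :
    (if 0 ≤ x then min (x / r) 1 else 0) = x / r := by
  rw [if_pos hx, min_eq_left ((div_le_one hr).mpr h)]

private lemma fca_le_div {r x : ℝ} (hr : 0 < r) (hx : 0 ≤ x) :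
    (if 0 ≤ x then min (x / r) 1 else 0) ≤ x / r := by
  rw [if_pos hx]; exact min_le_left _ _

/-- Under the minimum station capacity assumption, a modular FCS
always admits a feasible integer module allocation that is EF1, Pareto efficient,
and proportional. -/
theorem exists_fair_allocation_modular {ι : Type*}
    (nport mport : ℕ) (hnport : 1 ≤ nport) (hmport : 1 ≤ mport)
    (mCS : ℕ) (hcap : mport + (nport - 1) ≤ mCS)
    (E : Finset ι) (hE : E.Nonempty) (hEcard : E.card ≤ nport)
    (r : ι → ℝ) (hr : ∀ i ∈ E, 0 < r i ∧ r i ≤ (mport : ℝ))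
    (u : ι → ℝ → ℝ)
    (hu : ∀ i, ∀ x : ℝ, u i x = if 0 ≤ x then min (x / r i) 1 else 0) :
    ∃ m : ι → ℕ,
      -- feasibility
      ((∀ i ∈ E, m i ≤ mport) ∧ ∑ i ∈ E, m i ≤ mCS) ∧
      -- (1) EF1
      (∀ i ∈ E, ∀ j ∈ E, u i (m i : ℝ) ≥ u i ((m j : ℝ) - 1)) ∧
      -- (2) Pareto efficiency among feasible integer allocations
      (∀ m' : ι → ℕ, (∀ i ∈ E, m' i ≤ mport) → (∑ i ∈ E, m' i ≤ mCS) →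
        (∃ i ∈ E, u i (m' i : ℝ) > u i (m i : ℝ)) →
        ∃ k ∈ E, u k (m' k : ℝ) < u k (m k : ℝ)) ∧
      -- (3) proportionality
      (∀ i ∈ E, u i (m i : ℝ) ≥ u i (mCS : ℝ) / (E.card : ℝ)) := by
  classical
  have hn : 1 ≤ E.card := Finset.Nonempty.card_pos hE
  have hceil_le : ∀ i ∈ E, ⌈r i⌉₊ ≤ mport := fun i hi =>
    Nat.ceil_le.mpr (hr i hi).2
  have hule1 : ∀ i (x : ℝ), u i x ≤ 1 := fun i x => by rw [hu]; exact fca_le_one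
  by_cases hfull : ∑ i ∈ E, ⌈r i⌉₊ ≤ mCS
  · -- everyone fully satisfied
    have hval : ∀ i ∈ E, u i ((⌈r i⌉₊ : ℕ) : ℝ) = 1 := fun i hi => by
      rw [hu]; exact fca_full (hr i hi).1 (Nat.le_ceil _)
    refine ⟨fun i => ⌈r i⌉₊, ⟨hceil_le, hfull⟩, ?_, ?_, ?_⟩
    · intro i hi j hj
      rw [ge_iff_le, hval i hi]; exact hule1 i _ |>.trans le_rfl
    · rintro m' _ _ ⟨i, hi, hgt⟩
      exact absurd hgt (not_lt.mpr (by rw [hval i hi]; exact hule1 i _))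
    · intro i hi
      rw [ge_iff_le, hval i hi]
      exact div_le_one_of_le₀ ((hule1 i _).trans (by exact_mod_cast hn))
        (by positivity)
  · -- water-filling case
    push_neg at hfull
    have hmportCS : mport ≤ mCS := le_trans (Nat.le_add_right _ _) hcap
    set P : ℕ → Prop := fun s => ∑ i ∈ E, min (⌈r i⌉₊) s ≤ mCS with hPdef
    have hP0 : P 0 := by simp [hPdef]
    have hPtop : ¬ P mCS := by
      have h1 : ∀ i ∈ E, min (⌈r i⌉₊) mCS = ⌈r i⌉₊ := fun i hi =>
        min_eq_left ((hceil_le i hi).trans hmportCS)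
      simp only [hPdef]
      rw [Finset.sum_congr rfl h1]
      omega
    set t := Nat.findGreatest P mCS with ht
    have hPt : P t := Nat.findGreatest_spec (Nat.zero_le _) hP0
    have htlt : t < mCS :=
      Nat.lt_of_le_of_ne (Nat.findGreatest_le mCS) (fun h => hPtop (h ▸ hPt))
    have hPt1 : ¬ P (t + 1) := Nat.findGreatest_is_greatest (Nat.lt_succ_self t) htlt
    have hPtsum : ∑ i ∈ E, min (⌈r i⌉₊) t ≤ mCS := hPt
    have hPt1sum : mCS < ∑ i ∈ E, min (⌈r i⌉₊) (t + 1) := by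
      simpa [hPdef] using hPt1
    set U := E.filter (fun i => t < ⌈r i⌉₊) with hU
    have hsplit : ∑ i ∈ E, min (⌈r i⌉₊) (t + 1)
        = ∑ i ∈ E, min (⌈r i⌉₊) t + U.card := by
      rw [hU, Finset.card_filter, ← Finset.sum_add_distrib]
      refine Finset.sum_congr rfl fun i _ => ?_
      split_ifs with h <;> omega
    have hdU : mCS - ∑ i ∈ E, min (⌈r i⌉₊) t < U.card := by omega
    obtain ⟨S, hSU, hScard⟩ := Finset.exists_subset_card_eq hdU.le
    have hSE : S ⊆ E := hSU.trans (Finset.filter_subset _ _)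
    set m : ι → ℕ := fun i => min (⌈r i⌉₊) t + (if i ∈ S then 1 else 0) with hm
    have hmle : ∀ i ∈ E, m i ≤ ⌈r i⌉₊ := by
      intro i hi
      simp only [hm]
      split_ifs with h
      · have h2 : t < ⌈r i⌉₊ := by
          have := Finset.mem_filter.mp (hSU h)
          exact this.2
        omega
      · omega
    have hmub : ∀ i ∈ E, m i ≤ t + 1 := by
      intro i hi
      simp only [hm]
      split_ifs <;> omega
    have hmt : ∀ i ∈ E, m i < ⌈r i⌉₊ → t ≤ m i := by
      intro i hi h
      simp only [hm] at h ⊢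
      split_ifs at h ⊢ <;> omega
    have hsum : ∑ i ∈ E, m i = mCS := by
      have h1 : ∑ i ∈ E, (if i ∈ S then 1 else 0) = S.card := by
        rw [Finset.sum_ite_mem, Finset.inter_eq_right.mpr hSE]
        simp
      simp only [hm]
      rw [Finset.sum_add_distrib, h1, hScard]
      omega
    have hnt : mport ≤ E.card * t := by
      have h3 : ∑ i ∈ E, min (⌈r i⌉₊) (t + 1) ≤ E.card * (t + 1) := by
        calc ∑ i ∈ E, min (⌈r i⌉₊) (t + 1) ≤ ∑ _i ∈ E, (t + 1) :=
              Finset.sum_le_sum (fun i _ => min_le_right _ _)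
          _ = E.card * (t + 1) := by rw [Finset.sum_const, smul_eq_mul]
      have h6 : mCS < E.card * t + E.card := by
        have h7 := lt_of_lt_of_le hPt1sum h3
        rw [Nat.mul_succ] at h7
        exact h7
      have h4 : E.card ≤ nport := hEcard
      have h5 : mport + (nport - 1) ≤ mCS := hcap
      omega
    refine ⟨m, ⟨fun i hi => (hmle i hi).trans (hceil_le i hi), le_of_eq hsum⟩,
      ?_, ?_, ?_⟩
    · -- EF1
      intro i hi j hj
      rcases le_or_gt (r i) ((m i : ℕ) : ℝ) with hsat | hunsat
      · rw [ge_iff_le, show u i ((m i : ℕ) : ℝ) = 1 from by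
          rw [hu]; exact fca_full (hr i hi).1 hsat]
        exact hule1 i _
      · have h1 : m i < ⌈r i⌉₊ := Nat.lt_ceil.mpr hunsat
        have h2 : t ≤ m i := hmt i hi h1
        have h3 : m j ≤ t + 1 := hmub j hj
        rw [ge_iff_le, hu, hu]
        apply fca_mono (hr i hi).1
        have h3' : ((m j : ℕ) : ℝ) ≤ (t : ℝ) + 1 := by exact_mod_cast h3
        have h2' : (t : ℝ) ≤ ((m i : ℕ) : ℝ) := by exact_mod_cast h2
        linarith
    · -- Pareto
      rintro m' hm'le hm'sum ⟨i, hi, hgt⟩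
      by_contra hcon
      push_neg at hcon
      have hle : ∀ k ∈ E, m k ≤ m' k := by
        intro k hk
        have hk1 := hcon k hk
        rcases le_or_gt (r k) ((m k : ℕ) : ℝ) with hsat | hunsat
        · have h1 : u k ((m k : ℕ) : ℝ) = 1 := by
            rw [hu]; exact fca_full (hr k hk).1 hsat
          have h3 : (1 : ℝ) ≤ u k ((m' k : ℕ) : ℝ) := h1 ▸ hk1
          have h4 : u k ((m' k : ℕ) : ℝ) ≤ ((m' k : ℕ) : ℝ) / r k := by
            rw [hu]; exact fca_le_div (hr k hk).1 (by positivity)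
          have h5 : r k ≤ ((m' k : ℕ) : ℝ) := by
            have h6 := h3.trans h4
            rwa [one_le_div (hr k hk).1] at h6
          exact (hmle k hk).trans (Nat.ceil_le.mpr h5)
        · have h1 : u k ((m k : ℕ) : ℝ) = ((m k : ℕ) : ℝ) / r k := by
            rw [hu]; exact fca_lin (hr k hk).1 (by positivity) hunsat.le
          have h4 : u k ((m' k : ℕ) : ℝ) ≤ ((m' k : ℕ) : ℝ) / r k := by
            rw [hu]; exact fca_le_div (hr k hk).1 (by positivity)
          have h6 : ((m k : ℕ) : ℝ) / r k ≤ ((m' k : ℕ) : ℝ) / r k :=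
            (h1 ▸ hk1).trans h4
          have h7 : ((m k : ℕ) : ℝ) ≤ ((m' k : ℕ) : ℝ) :=
            (div_le_div_iff_of_pos_right (hr k hk).1).mp h6
          exact_mod_cast h7
      have hlt : m i < m' i := by
        rcases le_or_gt (r i) ((m i : ℕ) : ℝ) with hsat | hunsat
        · exact absurd hgt (not_lt.mpr (by
            rw [show u i ((m i : ℕ) : ℝ) = 1 from by
              rw [hu]; exact fca_full (hr i hi).1 hsat]
            exact hule1 i _))
        · have h1 : u i ((m i : ℕ) : ℝ) = ((m i : ℕ) : ℝ) / r i := by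
            rw [hu]; exact fca_lin (hr i hi).1 (by positivity) hunsat.le
          have h4 : u i ((m' i : ℕ) : ℝ) ≤ ((m' i : ℕ) : ℝ) / r i := by
            rw [hu]; exact fca_le_div (hr i hi).1 (by positivity)
          have h6 : ((m i : ℕ) : ℝ) / r i < ((m' i : ℕ) : ℝ) / r i :=
            lt_of_lt_of_le (h1 ▸ hgt) h4
          have h7 : ((m i : ℕ) : ℝ) < ((m' i : ℕ) : ℝ) :=
            (div_lt_div_iff_of_pos_right (hr i hi).1).mp h6
          exact_mod_cast h7
      have hslt : ∑ k ∈ E, m k < ∑ k ∈ E, m' k :=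
        Finset.sum_lt_sum hle ⟨i, hi, hlt⟩
      omega
    · -- proportionality
      intro i hi
      have hpos := (hr i hi).1
      have hcard : (1 : ℝ) ≤ (E.card : ℝ) := by exact_mod_cast hn
      have hRHS : u i ((mCS : ℕ) : ℝ) / (E.card : ℝ) ≤ 1 / (E.card : ℝ) := by
        exact (div_le_div_iff_of_pos_right (by linarith : (0:ℝ) < E.card)).mpr
          (hule1 i _)
      rcases le_or_gt (r i) ((m i : ℕ) : ℝ) with hsat | hunsat
      · rw [ge_iff_le, show u i ((m i : ℕ) : ℝ) = 1 from by
          rw [hu]; exact fca_full hpos hsat]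
        calc u i ((mCS : ℕ) : ℝ) / (E.card : ℝ) ≤ 1 / (E.card : ℝ) := hRHS
          _ ≤ 1 := by rw [div_le_one (by linarith)]; exact hcard
      · have h2 : t ≤ m i := hmt i hi (Nat.lt_ceil.mpr hunsat)
        have hlin : u i ((m i : ℕ) : ℝ) = ((m i : ℕ) : ℝ) / r i := by
          rw [hu]; exact fca_lin hpos (by positivity) hunsat.le
        have hkey : r i ≤ (E.card : ℝ) * ((m i : ℕ) : ℝ) := by
          have h3 : mport ≤ E.card * m i :=
            hnt.trans (Nat.mul_le_mul_left _ h2)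
          calc r i ≤ (mport : ℝ) := (hr i hi).2
            _ ≤ ((E.card * m i : ℕ) : ℝ) := by exact_mod_cast h3
            _ = (E.card : ℝ) * ((m i : ℕ) : ℝ) := by push_cast; ring
        have h1n : 1 / (E.card : ℝ) ≤ ((m i : ℕ) : ℝ) / r i := by
          rw [div_le_div_iff₀ (by linarith) hpos]
          linarith
        rw [ge_iff_le, hlin]
        exact hRHS.trans h1n
end

section
/- Let E be a finite set, let r_i > 0 be real module requests for i ∈ E, with utilities u_i(x) = min(x / r_i, 1) for x ≥ 0 and u_i(x) = 0 for x < 0, and let m : E → ℕ be an integer allocation. Suppose there exists a natural number T such that for every i ∈ E, either m_i = ⌈r_i⌉ and m_i ≤ T (EV i is fulfilled), or m_i < ⌈r_i⌉ and T − 1 ≤ m_i ≤ T (EV i is unfulfilled with near-maximal allocation). Then m is envy-free up to one module: u_i(m_i) ≥ u_i(m_j − 1) for all i, j ∈ E. -/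
/-- Any integer allocation with the round-robin structure of
Fair-Opap-M (fulfilled EVs get exactly `⌈r i⌉ ≤ T`; unfulfilled EVs get `T − 1`
or `T` modules) is envy-free up to one module. -/
theorem roundrobin_ef1 {ι : Type*} (E : Finset ι)
    (r : ι → ℝ) (hr : ∀ i ∈ E, 0 < r i)
    (u : ι → ℝ → ℝ)
    (hu : ∀ i, ∀ x : ℝ, u i x = if 0 ≤ x then min (x / r i) 1 else 0)
    (m : ι → ℕ) (T : ℕ)
    (hstruct : ∀ i ∈ E,
      (m i = ⌈r i⌉₊ ∧ m i ≤ T) ∨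
      (m i < ⌈r i⌉₊ ∧ T - 1 ≤ m i ∧ m i ≤ T)) :
    ∀ i ∈ E, ∀ j ∈ E, u i (m i : ℝ) ≥ u i ((m j : ℝ) - 1) := by
  intro i hi j hj
  have hri := hr i hi
  have hRHS_le1 : u i ((m j : ℝ) - 1) ≤ 1 := by
    rw [hu]
    split
    · exact min_le_right _ _
    · norm_num
  rcases hstruct i hi with ⟨hmi, hmiT⟩ | ⟨hlt, hTm, hmT⟩
  · -- fulfilled: u i (m i) = 1
    have h1 : r i ≤ (m i : ℝ) := by
      rw [hmi]; exact Nat.le_ceil _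
    have : u i (m i : ℝ) = 1 := by
      rw [hu, if_pos (by positivity)]
      rw [min_eq_right]
      exact (le_div_iff₀ hri).2 (by linarith)
    rw [this]; exact hRHS_le1
  · -- unfulfilled
    have hmilt : (m i : ℝ) < r i := by
      have : (m i : ℝ) < ⌈r i⌉₊ := by exact_mod_cast hlt
      have h2 : (⌈r i⌉₊ : ℝ) < r i + 1 := Nat.ceil_lt_add_one hri.le
      have : (m i : ℝ) ≤ (⌈r i⌉₊ : ℝ) - 1 := by
        have : m i + 1 ≤ ⌈r i⌉₊ := hlt
        have := (Nat.cast_le (α := ℝ)).2 this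
        push_cast at this; linarith
      linarith
    have hLHS : u i (m i : ℝ) = (m i : ℝ) / r i := by
      rw [hu, if_pos (by positivity), min_eq_left]
      exact (div_le_one hri).2 hmilt.le
    rw [hLHS]
    rw [hu]
    split
    · rename_i hpos
      have hmj1 : (1 : ℝ) ≤ (m j : ℝ) := by linarith
      have hmjn : 1 ≤ m j := by exact_mod_cast hmj1
      have hmjT : m j ≤ T := by
        rcases hstruct j hj with ⟨_, h⟩ | ⟨_, _, h⟩ <;> exact h
      have hT1 : 1 ≤ T := le_trans hmjn hmjT
      have : (m j : ℝ) - 1 ≤ (m i : ℝ) := by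
        have h1 : m j - 1 ≤ T - 1 := Nat.sub_le_sub_right hmjT 1
        have h2 : m j - 1 ≤ m i := le_trans h1 hTm
        have h3 := (Nat.cast_le (α := ℝ)).2 h2
        rw [Nat.cast_sub hmjn] at h3; exact_mod_cast h3
      calc min (((m j : ℝ) - 1) / r i) 1 ≤ ((m j : ℝ) - 1) / r i := min_le_left _ _
        _ ≤ (m i : ℝ) / r i := by gcongr
        _ = (m i : ℝ) / r i := rfl
    · positivity
end

section
/- Let E be a nonempty finite set, m_port ≥ 1 and m_CS natural numbers, and let r_i be real module requests with 0 < r_i ≤ m_port for i ∈ E, with utilities u_i(x) = min(x / r_i, 1). Let m : E → ℕ satisfy m_i ≤ ⌈r_i⌉ for all i ∈ E and ∑_{i∈E} m_i = min(m_CS, ∑_{i∈E} ⌈r_i⌉). Then m is Pareto efficient among feasible integer allocations: for every m' : E → ℕ with m'_i ≤ m_port for all i and ∑_{i∈E} m'_i ≤ m_CS, if u_i(m'_i) > u_i(m_i) for some i ∈ E, then u_k(m'_k) < u_k(m_k) for some k ∈ E. -/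
/-- Any integer allocation with `m i ≤ ⌈r i⌉` that exactly exhausts
`min m_CS (∑ ⌈r i⌉)` is Pareto efficient among feasible integer allocations. -/
theorem pareto_efficient_modular {ι : Type*} (E : Finset ι) (hE : E.Nonempty)
    (mport mCS : ℕ) (hmport : 1 ≤ mport)
    (r : ι → ℝ) (hr : ∀ i ∈ E, 0 < r i ∧ r i ≤ (mport : ℝ))
    (u : ι → ℝ → ℝ) (hu : ∀ i, ∀ x : ℝ, u i x = min (x / r i) 1)
    (m : ι → ℕ) (hm : ∀ i ∈ E, m i ≤ ⌈r i⌉₊)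
    (hsum : ∑ i ∈ E, m i = min mCS (∑ i ∈ E, ⌈r i⌉₊)) :
    ∀ m' : ι → ℕ, (∀ i ∈ E, m' i ≤ mport) → (∑ i ∈ E, m' i ≤ mCS) →
      (∃ i ∈ E, u i (m' i : ℝ) > u i (m i : ℝ)) →
      ∃ k ∈ E, u k (m' k : ℝ) < u k (m k : ℝ) := by
  intro m' hport hsum' ⟨i, hi, hgt⟩
  by_contra h
  push_neg at h
  have hri := (hr i hi).1
  rw [hu, hu] at hgt
  -- strict improvement at i forces m i < r i and m i < m' i
  have hmilt : (m i : ℝ) / r i < 1 := by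
    rcases lt_or_ge ((m i : ℝ) / r i) 1 with h1 | h1
    · exact h1
    · rw [min_eq_right h1] at hgt
      exact absurd (min_le_right _ _) (not_le_of_gt hgt)
  have hmin_i : min ((m i : ℝ) / r i) 1 = (m i : ℝ) / r i := min_eq_left hmilt.le
  have hi' : m i < m' i := by
    have h2 : (m i : ℝ) / r i < (m' i : ℝ) / r i := by
      rw [hmin_i] at hgt
      exact lt_of_lt_of_le hgt (min_le_left _ _)
    have := (div_lt_div_iff_of_pos_right hri).1 h2
    exact_mod_cast this
  -- everywhere m ≤ m'
  have key : ∀ k ∈ E, m k ≤ m' k := by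
    intro k hk
    by_contra hlt
    push_neg at hlt
    have hrk := (hr k hk).1
    have hk' := h k hk
    rw [hu, hu] at hk'
    -- show m' k ≥ r k leads to contradiction with m' k < m k ≤ ⌈r k⌉
    rcases lt_or_ge ((m' k : ℝ) / r k) 1 with h1 | h1
    · have hlt' : (m' k : ℝ) / r k < (m k : ℝ) / r k := by
        have hcast : (m' k : ℝ) < (m k : ℝ) := by exact_mod_cast hlt
        exact (div_lt_div_iff_of_pos_right hrk).2 hcast
      have : min ((m k : ℝ) / r k) 1 ≤ (m' k : ℝ) / r k := by
        rw [min_eq_left h1.le] at hk'; exact hk'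
      exact absurd this (not_le_of_gt (lt_min hlt' h1))
    · -- m' k ≥ r k, so m' k ≥ ⌈r k⌉ ≥ m k
      have : r k ≤ (m' k : ℝ) := (one_le_div hrk).1 h1
      have : ⌈r k⌉₊ ≤ m' k := Nat.ceil_le.2 this
      exact absurd (le_trans (hm k hk) this) (not_le_of_gt hlt)
  -- sum comparison
  have hstrict : ∑ k ∈ E, m k < ∑ k ∈ E, m' k :=
    Finset.sum_lt_sum key ⟨i, hi, hi'⟩
  rcases le_or_gt mCS (∑ k ∈ E, ⌈r k⌉₊) with hc | hc
  · rw [min_eq_left hc] at hsum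
    omega
  · rw [min_eq_right hc.le] at hsum
    -- then m i = ⌈r i⌉, so u i (m i) = 1, contradiction
    have hmi : m i = ⌈r i⌉₊ := by
      by_contra hne
      have : m i < ⌈r i⌉₊ := lt_of_le_of_ne (hm i hi) hne
      have := Finset.sum_lt_sum (fun k hk => hm k hk) ⟨i, hi, this⟩
      omega
    have : r i ≤ (m i : ℝ) := by rw [hmi]; exact Nat.le_ceil _
    have : (1 : ℝ) ≤ (m i : ℝ) / r i := (one_le_div hri).2 this
    linarith [hmilt]
end

section
/- Let n ≥ 1, M, and k be natural numbers, let r > 0 be a real number with (M : ℝ) ≥ r + (n − 1), and let u(x) = min(x / r, 1). If k ≥ ⌊M / n⌋ (natural-number division), then u(k) ≥ u(M) / n, i.e. min(k / r, 1) ≥ (1/n) · min(M / r, 1). -/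
/-- If an EV with request `r` receives at least `⌊M / n⌋` modules and
`(M : ℝ) ≥ r + ((n : ℝ) − 1)`, then its utility is at least a `1/n` fraction of the
utility it would obtain from all `M` modules. -/
theorem floor_share_utility (n M k : ℕ) (hn : 1 ≤ n) (r : ℝ) (hr : 0 < r)
    (hM : (M : ℝ) ≥ r + ((n : ℝ) - 1)) (hk : M / n ≤ k) :
    min ((k : ℝ) / r) 1 ≥ (1 / (n : ℝ)) * min ((M : ℝ) / r) 1 := by
  have hn0 : (0 : ℝ) < n := by exact_mod_cast hn
  -- n * k ≥ M - (n-1) in ℝ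
  have h1 : (M : ℝ) ≤ n * k + (n - 1) := by
    have h2 : M ≤ n * (M / n) + (n - 1) := by
      have h := Nat.div_add_mod M n
      have := Nat.mod_lt M (show 0 < n by omega)
      omega
    have h3 : (n : ℝ) * (M / n : ℕ) + ((n : ℝ) - 1) ≤ n * k + ((n : ℝ) - 1) := by
      have : ((M / n : ℕ) : ℝ) ≤ (k : ℝ) := by exact_mod_cast hk
      nlinarith
    calc (M : ℝ) ≤ (n * (M / n) + (n - 1) : ℕ) := by exact_mod_cast h2
      _ = (n : ℝ) * (M / n : ℕ) + ((n : ℝ) - 1) := by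
          push_cast [Nat.cast_sub hn]; ring
      _ ≤ _ := h3
  have hkr : r ≤ n * k := by linarith
  -- hence k/r ≥ 1/n
  have hkey : 1 / (n : ℝ) ≤ (k : ℝ) / r := by
    rw [div_le_div_iff₀ hn0 hr]
    nlinarith
  have hmin : (1 / (n : ℝ)) * min ((M : ℝ) / r) 1 ≤ 1 / n := by
    have : min ((M : ℝ) / r) 1 ≤ 1 := min_le_right _ _
    nlinarith [one_div_pos.mpr hn0]
  have : (1 / (n : ℝ)) ≤ min ((k : ℝ) / r) 1 := by
    refine le_min hkey ?_
    rw [div_le_one hn0]; exact_mod_cast hn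
  linarith
end

section
/- Let n_port ≥ 1 and m_port ≥ 1 be natural numbers, let m_CS be a natural number with m_CS ≥ m_port + (n_port − 1), let E be a nonempty finite set with |E| ≤ n_port, and let r_i be real module requests with 0 < r_i ≤ m_port for i ∈ E, with utilities u_i(x) = min(x / r_i, 1) for x ≥ 0 and u_i(x) = 0 for x < 0. Let m : E → ℕ be an allocation satisfying: (a) m_i ≤ ⌈r_i⌉ for all i ∈ E; (b) ∑_{i∈E} m_i = min(m_CS, ∑_{i∈E} ⌈r_i⌉); (c) there exists a natural number T such that every i ∈ E has either m_i = ⌈r_i⌉ ≤ T, or m_i < ⌈r_i⌉ and T − 1 ≤ m_i ≤ T; and (d) every i ∈ E with m_i < ⌈r_i⌉ satisfies m_i ≥ ⌊m_CS / |E|⌋. Then m is a fair allocation for the modular station: it is feasible (m_i ≤ m_port and ∑_{i∈E} m_i ≤ m_CS), envy-free up to one module, Pareto efficient among feasible integer allocations, and proportional. -/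
/-- Any integer allocation satisfying the structural properties
(a)–(d) of the output of Fair-Opap-M is a fair allocation for the modular
station: feasible, EF1, Pareto efficient, and proportional. -/
theorem fair_opap_m_output_fair {ι : Type*}
    (nport mport : ℕ) (hnport : 1 ≤ nport) (hmport : 1 ≤ mport)
    (mCS : ℕ) (hcap : mport + (nport - 1) ≤ mCS)
    (E : Finset ι) (hE : E.Nonempty) (hEcard : E.card ≤ nport)
    (r : ι → ℝ) (hr : ∀ i ∈ E, 0 < r i ∧ r i ≤ (mport : ℝ))
    (u : ι → ℝ → ℝ)
    (hu : ∀ i, ∀ x : ℝ, u i x = if 0 ≤ x then min (x / r i) 1 else 0)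
    (m : ι → ℕ)
    -- (a) nobody gets more than their rounded request
    (ha : ∀ i ∈ E, m i ≤ ⌈r i⌉₊)
    -- (b) the allocation exhausts the available modules
    (hb : ∑ i ∈ E, m i = min mCS (∑ i ∈ E, ⌈r i⌉₊))
    -- (c) round-robin structure
    (hc : ∃ T : ℕ, ∀ i ∈ E,
      (m i = ⌈r i⌉₊ ∧ m i ≤ T) ∨
      (m i < ⌈r i⌉₊ ∧ T - 1 ≤ m i ∧ m i ≤ T))
    -- (d) unfulfilled EVs receive at least the floor share
    (hd : ∀ i ∈ E, m i < ⌈r i⌉₊ → mCS / E.card ≤ m i) :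
    -- feasibility
    ((∀ i ∈ E, m i ≤ mport) ∧ ∑ i ∈ E, m i ≤ mCS) ∧
    -- EF1
    (∀ i ∈ E, ∀ j ∈ E, u i (m i : ℝ) ≥ u i ((m j : ℝ) - 1)) ∧
    -- Pareto efficiency among feasible integer allocations
    (∀ m' : ι → ℕ, (∀ i ∈ E, m' i ≤ mport) → (∑ i ∈ E, m' i ≤ mCS) →
      (∃ i ∈ E, u i (m' i : ℝ) > u i (m i : ℝ)) →
      ∃ k ∈ E, u k (m' k : ℝ) < u k (m k : ℝ)) ∧
    -- proportionality
    (∀ i ∈ E, u i (m i : ℝ) ≥ u i (mCS : ℝ) / (E.card : ℝ)) := by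
  obtain ⟨T, hT⟩ := hc
  have hcard1 : 1 ≤ E.card := hE.card_pos
  -- basic facts about u
  have hu_le_one : ∀ i ∈ E, ∀ x : ℝ, u i x ≤ 1 := by
    intro i hi x
    rw [hu]
    split
    · exact min_le_right _ _
    · norm_num
  have hu_nonneg : ∀ i ∈ E, ∀ x : ℝ, 0 ≤ u i x := by
    intro i hi x
    rw [hu]
    split
    · exact le_min (div_nonneg (by assumption) (hr i hi).1.le) zero_le_one
    · exact le_refl 0
  have hu_mono : ∀ i ∈ E, ∀ x y : ℝ, x ≤ y → u i x ≤ u i y := by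
    intro i hi x y hxy
    rcases le_or_gt 0 x with hx | hx
    · rw [hu, hu, if_pos hx, if_pos (hx.trans hxy)]
      have hrp := (hr i hi).1
      gcongr
    · rw [hu i x, if_neg (not_le.mpr hx)]
      exact hu_nonneg i hi y
  have hu_one : ∀ i ∈ E, ∀ x : ℝ, r i ≤ x → u i x = 1 := by
    intro i hi x hx
    rw [hu, if_pos ((hr i hi).1.le.trans hx)]
    rw [min_eq_right]
    exact (one_le_div (hr i hi).1).mpr hx
  -- if m i is fulfilled, utility is 1
  have hfull : ∀ i ∈ E, m i = ⌈r i⌉₊ → u i (m i : ℝ) = 1 := by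
    intro i hi him
    apply hu_one i hi
    rw [him]
    exact Nat.le_ceil _
  -- if k is given strictly fewer than m k ≤ ⌈r k⌉₊ modules, utility strictly drops
  have hdrop : ∀ k ∈ E, ∀ x : ℕ, x < m k → u k (x : ℝ) < u k (m k : ℝ) := by
    intro k hk x hx
    have hrk := (hr k hk).1
    have hceil : (⌈r k⌉₊ : ℝ) < r k + 1 := Nat.ceil_lt_add_one hrk.le
    have hxlt : (x : ℝ) < r k := by
      have h1 : x + 1 ≤ ⌈r k⌉₊ := lt_of_lt_of_le hx (ha k hk)
      have : (x : ℝ) + 1 ≤ (⌈r k⌉₊ : ℝ) := by exact_mod_cast h1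
      linarith
    have hxdiv : (x : ℝ) / r k < 1 := (div_lt_one hrk).mpr hxlt
    rw [hu k (x : ℝ), if_pos (by positivity), hu k (m k : ℝ), if_pos (by positivity)]
    rw [min_eq_left hxdiv.le]
    apply lt_min
    · gcongr <;> exact_mod_cast hx
    · exact hxdiv
  -- feasibility
  have hfeas1 : ∀ i ∈ E, m i ≤ mport := by
    intro i hi
    exact (ha i hi).trans (Nat.ceil_le.mpr (hr i hi).2)
  have hfeas2 : ∑ i ∈ E, m i ≤ mCS := hb ▸ min_le_left _ _
  refine ⟨⟨hfeas1, hfeas2⟩, ?_, ?_, ?_⟩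
  · -- EF1
    intro i hi j hj
    rcases hT i hi with ⟨him, _⟩ | ⟨hlt, hT1, hT2⟩
    · rw [hfull i hi him]
      exact hu_le_one i hi _
    · have hjT : m j ≤ T := by rcases hT j hj with ⟨_, h⟩ | ⟨_, _, h⟩ <;> exact h
      have hji : m j ≤ m i + 1 := by omega
      have : (m j : ℝ) - 1 ≤ (m i : ℝ) := by
        have : (m j : ℝ) ≤ (m i : ℝ) + 1 := by exact_mod_cast hji
        linarith
      exact hu_mono i hi _ _ this
  · -- Pareto
    intro m' hfe hsum ⟨i, hi, hgain⟩
    by_contra hcon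
    push_neg at hcon
    have hge : ∀ k ∈ E, m k ≤ m' k := by
      intro k hk
      by_contra hlt
      push_neg at hlt
      exact absurd (hdrop k hk (m' k) hlt) (not_lt.mpr (hcon k hk))
    have higt : m i < m' i := by
      by_contra hle
      push_neg at hle
      exact absurd (hu_mono i hi _ _ (by exact_mod_cast hle)) (not_le.mpr hgain)
    rcases le_or_gt (∑ k ∈ E, ⌈r k⌉₊) mCS with hcase | hcase
    · have hsum_eq : ∑ k ∈ E, m k = ∑ k ∈ E, ⌈r k⌉₊ := by
        rw [hb, min_eq_right hcase]
      have hpt : ∀ k ∈ E, m k = ⌈r k⌉₊ :=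
        (Finset.sum_eq_sum_iff_of_le ha).mp hsum_eq
      have : u i ((m' i : ℝ)) ≤ 1 := hu_le_one i hi _
      rw [hfull i hi (hpt i hi)] at hgain
      linarith
    · have hsum_eq : ∑ k ∈ E, m k = mCS := by
        rw [hb, min_eq_left hcase.le]
      have : ∑ k ∈ E, m k < ∑ k ∈ E, m' k :=
        Finset.sum_lt_sum hge ⟨i, hi, higt⟩
      omega
  · -- proportionality
    intro i hi
    have hrpos := (hr i hi).1
    have hcpos : (0:ℝ) < (E.card : ℝ) := by exact_mod_cast hcard1
    have hdivle : u i (mCS : ℝ) / (E.card : ℝ) ≤ 1 / (E.card : ℝ) := by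
      gcongr
      exact hu_le_one i hi _
    rcases hT i hi with ⟨him, _⟩ | ⟨hlt, _, _⟩
    · rw [hfull i hi him]
      calc u i (mCS : ℝ) / (E.card : ℝ) ≤ 1 / (E.card : ℝ) := hdivle
        _ ≤ 1 := by
            rw [div_le_one (by exact_mod_cast hcard1)]
            exact_mod_cast hcard1
    · -- unfulfilled: m i ≥ ⌊mCS / card⌋ and card * ⌊mCS/card⌋ ≥ mport
      have hq := hd i hi hlt
      have key : mport ≤ E.card * (mCS / E.card) := by
        have h3 := Nat.div_add_mod mCS E.card
        have h2 : mCS % E.card < E.card := Nat.mod_lt _ hcard1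
        have h1 : mport + (E.card - 1) ≤ mCS := by omega
        omega
      have key2 : mport ≤ E.card * m i :=
        key.trans (Nat.mul_le_mul_left _ hq)
      have hkey : r i ≤ (m i : ℝ) * (E.card : ℝ) := by
        have : (mport : ℝ) ≤ (E.card : ℝ) * (m i : ℝ) := by exact_mod_cast key2
        calc r i ≤ (mport : ℝ) := (hr i hi).2
          _ ≤ (E.card : ℝ) * (m i : ℝ) := this
          _ = (m i : ℝ) * (E.card : ℝ) := mul_comm _ _
      have hcardpos : (0 : ℝ) < (E.card : ℝ) := by exact_mod_cast hcard1
      have h1card : 1 / (E.card : ℝ) ≤ (m i : ℝ) / r i := by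
        rw [div_le_div_iff₀ hcardpos hrpos]
        linarith
      have hui : 1 / (E.card : ℝ) ≤ u i (m i : ℝ) := by
        rw [hu, if_pos (by positivity)]
        apply le_min h1card
        rw [div_le_one hcardpos]
        exact_mod_cast hcard1
      exact le_trans hdivle hui
end
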